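/- In a level-1 phylogenetic network N on a finite set X, for distinct taxa x, y ∈ X, the equality lca(x,y) = lsa(x,y) holds if and only if x and y have no splitting ancestor in N. -/

import Mathlib

open Relation

/-- A rooted phylogenetic network on a finite taxa set `X` with vertex type `V`:
a finite simple acyclic digraph with a unique root (indegree 0, reaching every
vertex), no vertices with indegree 1 and outdegree 1, whose leaves (outdegree-0
vertices) are bijectively labelled by `X`. -/
structure PhyloNetwork (V X : Type) [Fintype V] [Fintype X] where
  /-- arc relation of the digraph -/
  Adj : V → V → Prop
  /-- acyclicity: no directed cycle -/
  acyclic : ∀ v, ¬ Relation.TransGen Adj v v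
  /-- the root -/
  root : V
  /-- the root has indegree 0 -/
  root_no_parent : ∀ u, ¬ Adj u root
  /-- every vertex is reachable from the root by a directed path -/
  root_reaches : ∀ v, Relation.ReflTransGen Adj root v
  /-- no vertex has indegree 1 and outdegree 1 -/
  no_degenerate : ∀ v, ¬ ({u | Adj u v}.ncard = 1 ∧ {u | Adj v u}.ncard = 1)
  /-- the leaves are bijectively labelled by the taxa in `X` -/
  label : X ≃ {v : V // ∀ u, ¬ Adj v u}

namespace PhyloNetwork

variable {V X : Type} [Fintype V] [Fintype X] (N : PhyloNetwork V X)

/-- a leaf is a vertex of outdegree 0 -/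
def IsLeaf (v : V) : Prop := ∀ u, ¬ N.Adj v u

/-- the leaf labelled by taxon `x` -/
def leaf (x : X) : V := (N.label x).val

/-- `u` is below `v` (equivalently, `v` is above `u`): there is a directed
path from `v` to `u` -/
def below (u v : V) : Prop := Relation.ReflTransGen N.Adj v u

/-- `u` is strictly below `v` -/
def strictlyBelow (u v : V) : Prop := N.below u v ∧ u ≠ v

/-- the cluster of a vertex: the set of taxa labelling the leaves below it -/
def cluster (v : V) : Set X := {x | N.below (N.leaf x) v}

/-- a common ancestor of a set `Y` of taxa -/
def CommonAncestor (Y : Set X) (v : V) : Prop := Y ⊆ N.cluster v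

/-- a lowest common ancestor (LCA) of `Y`: a common ancestor of `Y` such that
no other common ancestor of `Y` is strictly below it -/
def IsLCA (Y : Set X) (v : V) : Prop :=
  N.CommonAncestor Y v ∧ ∀ u, N.CommonAncestor Y u → ¬ N.strictlyBelow u v

/-- `p` is a directed path from `u` to `v`, recorded as its list of vertices -/
def IsDipath (p : List V) (u v : V) : Prop :=
  p ≠ [] ∧ p.head? = some u ∧ p.getLast? = some v ∧ p.Chain' N.Adj ∧ p.Nodup

/-- the arc `(a, b)` is traversed by the path `p` -/
def ArcIn (p : List V) (a b : V) : Prop := (a, b) ∈ p.zip p.tail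

/-- a stable ancestor of `Y`: a vertex contained in every directed path from
the root to some taxon in `Y` -/
def StableAncestor (Y : Set X) (v : V) : Prop :=
  ∀ x ∈ Y, ∀ p : List V, N.IsDipath p N.root (N.leaf x) → v ∈ p

/-- the lowest stable ancestor (LSA) of `Y`: the stable ancestor of `Y`
that is below every stable ancestor of `Y` -/
def IsLSA (Y : Set X) (w : V) : Prop :=
  N.StableAncestor Y w ∧ ∀ v, N.StableAncestor Y v → N.below w v

/-- the underlying undirected graph of the network -/
def underlying : SimpleGraph V := SimpleGraph.fromRel N.Adj

/-- indegree of a vertex -/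
noncomputable def inDeg (v : V) : ℕ := {u | N.Adj u v}.ncard

/-- outdegree of a vertex -/
noncomputable def outDeg (v : V) : ℕ := {u | N.Adj v u}.ncard

/-- binary network: every non-leaf vertex has indegree at most 2 and
outdegree at most 2, and every vertex of indegree 2 has outdegree 1 -/
def Binary : Prop :=
  (∀ v, ¬ N.IsLeaf v → N.inDeg v ≤ 2 ∧ N.outDeg v ≤ 2) ∧
  (∀ v, N.inDeg v = 2 → N.outDeg v = 1)

/-- level-1 network: binary, and any two cycles of the underlying undirected
graph are vertex-disjoint (i.e. any two cycles sharing a vertex have the same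
vertex set) -/
def Level1 : Prop :=
  N.Binary ∧ ∀ (u v : V) (c₁ : N.underlying.Walk u u) (c₂ : N.underlying.Walk v v),
    c₁.IsCycle → c₂.IsCycle → ∀ w, w ∈ c₁.support → w ∈ c₂.support →
      ∀ z, (z ∈ c₁.support ↔ z ∈ c₂.support)

/-- a cut arc: an arc whose removal disconnects the underlying undirected graph -/
def CutArc (a b : V) : Prop :=
  N.Adj a b ∧ ¬ (SimpleGraph.fromRel (fun u v => N.Adj u v ∧ ¬ (u = a ∧ v = b))).Connected

/-- a splitting ancestor of distinct taxa `x` and `y`: a (non-leaf) vertex such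
that precisely one taxon from `{x, y}` is below both of its children, while the
other taxon is below exactly one of its two children -/
def SplittingAncestor (x y : X) (v : V) : Prop :=
  ∃ c₁ c₂, c₁ ≠ c₂ ∧ N.Adj v c₁ ∧ N.Adj v c₂ ∧
    ((N.below (N.leaf x) c₁ ∧ N.below (N.leaf x) c₂ ∧
        Xor' (N.below (N.leaf y) c₁) (N.below (N.leaf y) c₂)) ∨
     (N.below (N.leaf y) c₁ ∧ N.below (N.leaf y) c₂ ∧
        Xor' (N.below (N.leaf x) c₁) (N.below (N.leaf x) c₂)))

/-- saturated level-1 network: each non-leaf vertex is contained in a cycle of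
size three of the underlying undirected graph -/
def Saturated : Prop :=
  ∀ v, ¬ N.IsLeaf v → ∃ c : N.underlying.Walk v v, c.IsCycle ∧ c.length = 3

/-- the multiset of clusters induced by the vertices of the network -/
noncomputable def clusterMultiset : Multiset (Set X) :=
  (Finset.univ : Finset V).val.map N.cluster

/-- the Robinson–Foulds distance: the size of the symmetric difference of the
multisets of clusters of the two networks -/
noncomputable def rfDist {V V' X : Type} [Fintype V] [Fintype V'] [Fintype X]
    (N : PhyloNetwork V X) (N' : PhyloNetwork V' X) : ℕ :=
  letI : DecidableEq (Set X) := Classical.decEq _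
  ((N.clusterMultiset - N'.clusterMultiset) +
    (N'.clusterMultiset - N.clusterMultiset)).card

end PhyloNetwork

namespace PhyloNetwork

open Relation

variable {V X : Type} [Fintype V] [Fintype X] (N : PhyloNetwork V X)

lemma adj_ne {a b : V} (h : N.Adj a b) : a ≠ b := by
  rintro rfl
  exact N.acyclic a (Relation.TransGen.single h)

lemma rtg_to_tg {a b : V} (h : ReflTransGen N.Adj a b) (hne : a ≠ b) :
    TransGen N.Adj a b := by
  rcases h.cases_head with rfl | ⟨c, hac, hcb⟩
  · exact absurd rfl hne
  · exact Relation.TransGen.head' hac hcb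

lemma rtg_antisymm {a b : V} (h1 : ReflTransGen N.Adj a b) (h2 : ReflTransGen N.Adj b a) :
    a = b := by
  by_contra hne
  exact N.acyclic a ((N.rtg_to_tg h1 hne).trans (N.rtg_to_tg h2 (Ne.symm hne)))

lemma exists_min (S : Set V) (hS : S.Nonempty) :
    ∃ m ∈ S, ∀ v ∈ S, ¬ TransGen N.Adj m v := by
  haveI : IsTrans V (fun a b => TransGen N.Adj b a) := ⟨fun a b c h1 h2 => h2.trans h1⟩
  haveI : IsIrrefl V (fun a b => TransGen N.Adj b a) := ⟨fun a => N.acyclic a⟩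
  obtain ⟨m, hm, hmin⟩ :=
    (Finite.wellFounded_of_trans_of_irrefl (fun a b => TransGen N.Adj b a)).has_min S hS
  exact ⟨m, hm, fun v hv ht => hmin v hv ht⟩

lemma exists_max (S : Set V) (hS : S.Nonempty) :
    ∃ m ∈ S, ∀ v ∈ S, ¬ TransGen N.Adj v m := by
  haveI : IsTrans V (fun a b => TransGen N.Adj a b) := ⟨fun a b c h1 h2 => h1.trans h2⟩
  haveI : IsIrrefl V (fun a b => TransGen N.Adj a b) := ⟨fun a => N.acyclic a⟩
  obtain ⟨m, hm, hmin⟩ :=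
    (Finite.wellFounded_of_trans_of_irrefl (fun a b => TransGen N.Adj a b)).has_min S hS
  exact ⟨m, hm, fun v hv ht => hmin v hv ht⟩

lemma leaf_no_out (x : X) {v : V} (h : ReflTransGen N.Adj (N.leaf x) v) : v = N.leaf x := by
  rcases h.cases_head with rfl | ⟨c, hac, _⟩
  · rfl
  · exact absurd hac ((N.label x).2 c)

/-- the chain of a dipath yields reachability from head to last -/
lemma chain'_rtg : ∀ (p : List V), List.Chain' N.Adj p → ∀ {a b : V},
    p.head? = some a → p.getLast? = some b → ReflTransGen N.Adj a b := by
  intro p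
  induction p with
  | nil => intro _ a b ha _; simp at ha
  | cons hd tl ih =>
    intro hc a b ha hb
    cases tl with
    | nil =>
      obtain rfl : hd = a := by simpa using ha
      obtain rfl : hd = b := by simpa using hb
      exact ReflTransGen.refl
    | cons c rest =>
      simp only [List.head?_cons, Option.some.injEq] at ha
      subst ha
      rw [List.getLast?_cons_cons] at hb
      have h1 : N.Adj hd c := (List.isChain_cons_cons.1 hc).1
      have h2 := ih (List.isChain_cons_cons.1 hc).2 rfl hb
      exact ReflTransGen.head h1 h2

lemma dipath_between : ∀ (p : List V) {a b : V}, N.IsDipath p a b → ∀ {v : V}, v ∈ p →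
    ReflTransGen N.Adj a v ∧ ReflTransGen N.Adj v b := by
  intro p
  induction p with
  | nil => intro a b h v hv; simp at hv
  | cons hd tl ih =>
    intro a b h v hv
    obtain ⟨-, ha, hb, hc, hn⟩ := h
    simp only [List.head?_cons, Option.some.injEq] at ha
    subst ha
    rcases List.mem_cons.1 hv with rfl | hv'
    · exact ⟨ReflTransGen.refl, N.chain'_rtg _ hc rfl hb⟩
    · cases tl with
      | nil => simp at hv'
      | cons c rest =>
        rw [List.getLast?_cons_cons] at hb
        have hd1 : N.IsDipath (c :: rest) c b :=
          ⟨List.cons_ne_nil _ _, rfl, hb, (List.isChain_cons_cons.1 hc).2, hn.of_cons⟩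
        have h2 := ih hd1 hv'
        exact ⟨ReflTransGen.head (List.isChain_cons_cons.1 hc).1 h2.1, h2.2⟩

lemma exists_dipath {a b : V} (h : ReflTransGen N.Adj a b) :
    ∃ p : List V, N.IsDipath p a b ∧
      ∀ v ∈ p, ReflTransGen N.Adj a v ∧ ReflTransGen N.Adj v b := by
  induction h using Relation.ReflTransGen.head_induction_on with
  | refl =>
    refine ⟨[b], ⟨List.cons_ne_nil _ _, rfl, rfl, List.isChain_singleton _, List.nodup_singleton _⟩, ?_⟩
    intro v hv; simp at hv; subst hv; exact ⟨ReflTransGen.refl, ReflTransGen.refl⟩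
  | @head a' c' hac hcb ih =>
    obtain ⟨p, hp, hbtw⟩ := ih
    obtain ⟨hne, hhd, hlast, hch, hnd⟩ := hp
    have hanotin : a' ∉ p := by
      intro hmem
      exact N.acyclic a' (Relation.TransGen.head' hac (hbtw a' hmem).1)
    refine ⟨a' :: p, ⟨List.cons_ne_nil _ _, rfl, ?_, ?_, List.nodup_cons.2 ⟨hanotin, hnd⟩⟩, ?_⟩
    · cases p with
      | nil => exact absurd rfl hne
      | cons d l => rw [List.getLast?_cons_cons]; exact hlast
    · refine List.isChain_cons.2 ⟨?_, hch⟩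
      intro y hy; rw [hhd] at hy; simp at hy; subst hy; exact hac
    · intro v hv
      rcases List.mem_cons.1 hv with rfl | hv'
      · exact ⟨ReflTransGen.refl, ReflTransGen.head hac hcb⟩
      · exact ⟨ReflTransGen.head hac (hbtw v hv').1, (hbtw v hv').2⟩

lemma dipath_append {p q : List V} {a b c d : V} (hp : N.IsDipath p a b)
    (hq : N.IsDipath q c d) (hbc : N.Adj b c) (hdisj : ∀ v ∈ p, v ∉ q) :
    N.IsDipath (p ++ q) a d := by
  obtain ⟨hne, hhd, hlast, hch, hnd⟩ := hp
  obtain ⟨hne', hhd', hlast', hch', hnd'⟩ := hq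
  refine ⟨by simp [hne], ?_, ?_, ?_, List.Nodup.append hnd hnd' hdisj⟩
  · cases p with
    | nil => exact absurd rfl hne
    | cons x l => simpa using hhd
  · rw [List.getLast?_append, hlast']; rfl
  · refine List.isChain_append.2 ⟨hch, hch', ?_⟩
    intro x hx y hy
    rw [hlast] at hx; rw [hhd'] at hy
    simp at hx hy; subst hx; subst hy; exact hbc

lemma exists_transition (P : V → Prop) {b : V} : ∀ (p : List V), List.Chain' N.Adj p →
    ∀ {a : V}, p.head? = some a → P a → p.getLast? = some b → ¬ P b →
    ∃ a' b', N.Adj a' b' ∧ P a' ∧ ¬ P b' ∧ a' ∈ p ∧ b' ∈ p := by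
  intro p
  induction p with
  | nil => intro _ a ha; simp at ha
  | cons hd tl ih =>
    intro hc a ha hPa hb hPb
    obtain rfl : hd = a := by simpa using ha
    cases tl with
    | nil =>
      obtain rfl : hd = b := by simpa using hb
      exact absurd hPa hPb
    | cons c rest =>
      rw [List.getLast?_cons_cons] at hb
      by_cases hPc : P c
      · obtain ⟨a', b', h1, h2, h3, h4, h5⟩ :=
          ih (List.isChain_cons_cons.1 hc).2 rfl hPc hb hPb
        exact ⟨a', b', h1, h2, h3, List.mem_cons_of_mem _ h4, List.mem_cons_of_mem _ h5⟩
      · exact ⟨hd, c, (List.isChain_cons_cons.1 hc).1, hPa, hPc, List.mem_cons_self,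
          List.mem_cons_of_mem _ (List.mem_cons_self)⟩

end PhyloNetwork

namespace PhyloNetwork

open Relation SimpleGraph

variable {V X : Type} [Fintype V] [Fintype X] (N : PhyloNetwork V X)

lemma exists_walk {a b : V} (h : ReflTransGen N.Adj a b) :
    ∃ p : N.underlying.Walk a b, p.IsPath ∧
      ∀ v ∈ p.support, ReflTransGen N.Adj a v ∧ ReflTransGen N.Adj v b := by
  induction h using Relation.ReflTransGen.head_induction_on with
  | refl =>
    refine ⟨Walk.nil, Walk.IsPath.nil, ?_⟩
    intro v hv
    rw [Walk.support_nil, List.mem_singleton] at hv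
    subst hv; exact ⟨ReflTransGen.refl, ReflTransGen.refl⟩
  | @head a' c' hac hcb ih =>
    obtain ⟨p, hp, hbtw⟩ := ih
    have hadj : N.underlying.Adj a' c' :=
      (SimpleGraph.fromRel_adj _ _ _).2 ⟨N.adj_ne hac, Or.inl hac⟩
    have hanotin : a' ∉ p.support := by
      intro hmem
      exact N.acyclic a' (Relation.TransGen.head' hac (hbtw a' hmem).1)
    refine ⟨Walk.cons hadj p, hp.cons hanotin, ?_⟩
    intro v hv
    rw [Walk.support_cons, List.mem_cons] at hv
    rcases hv with rfl | hv'
    · exact ⟨ReflTransGen.refl, ReflTransGen.head hac hcb⟩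
    · exact ⟨ReflTransGen.head hac (hbtw v hv').1, (hbtw v hv').2⟩

lemma isPath_append {G : SimpleGraph V} {a b c : V} {p : G.Walk a b} {q : G.Walk b c}
    (hp : p.IsPath) (hq : q.IsPath) (hint : ∀ v ∈ p.support, v ∈ q.support → v = b) :
    (p.append q).IsPath := by
  rw [Walk.isPath_def, Walk.support_append]
  refine List.Nodup.append hp.support_nodup hq.support_nodup.tail ?_
  intro v hvp hvq
  have hvb : v = b := hint v hvp (List.mem_of_mem_tail hvq)
  subst hvb
  have := hq.support_nodup
  rw [q.support_eq_cons] at this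
  exact (List.nodup_cons.1 this).1 hvq

lemma isPath_loop_eq_nil {G : SimpleGraph V} {a : V} (p : G.Walk a a) (hp : p.IsPath) :
    p = Walk.nil := by
  cases p with
  | nil => rfl
  | cons h q =>
    exfalso
    have hnd := hp.support_nodup
    rw [Walk.support_cons] at hnd
    exact (List.nodup_cons.1 hnd).1 q.end_mem_support

lemma path_edge_ends {G : SimpleGraph V} {a c : V} : ∀ (p : G.Walk a c), p.IsPath →
    s(a, c) ∈ p.edges → p.support = [a, c] := by
  intro p hp he
  cases p with
  | nil => simp at he
  | @cons _ d _ h q =>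
    rw [Walk.edges_cons, List.mem_cons] at he
    rcases he with he1 | he2
    · rcases Sym2.eq_iff.1 he1.symm with ⟨-, rfl⟩ | ⟨rfl, rfl⟩
      · have : q = Walk.nil := isPath_loop_eq_nil q hp.of_cons
        subst this
        simp [Walk.support_cons, Walk.support_nil]
      · exact absurd h G.irrefl
    · exfalso
      have hnd := hp.support_nodup
      rw [Walk.support_cons] at hnd
      exact (List.nodup_cons.1 hnd).1 (q.fst_mem_support_of_mem_edges he2)

lemma isCycle_append_reverse {G : SimpleGraph V} {a c : V} (p q : G.Walk a c)
    (hp : p.IsPath) (hq : q.IsPath) (hac : a ≠ c)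
    (hint : ∀ v ∈ p.support, v ∈ q.support → v = a ∨ v = c)
    (hdiff : ∃ v ∈ p.support, v ∉ q.support) :
    (p.append q.reverse).IsCycle := by
  rw [Walk.isCycle_def]
  refine ⟨?_, ?_, ?_⟩
  · -- trail: edges nodup
    rw [Walk.isTrail_def, Walk.edges_append, Walk.edges_reverse]
    refine List.Nodup.append hp.isTrail.edges_nodup
      (List.nodup_reverse.2 hq.isTrail.edges_nodup) ?_
    intro e hep heq
    rw [List.mem_reverse] at heq
    induction e with
    | h x₁ x₂ =>
      have hadj : G.Adj x₁ x₂ := p.adj_of_mem_edges hep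
      have h1p : x₁ ∈ p.support := p.fst_mem_support_of_mem_edges hep
      have h2p : x₂ ∈ p.support := p.snd_mem_support_of_mem_edges hep
      have h1q : x₁ ∈ q.support := q.fst_mem_support_of_mem_edges heq
      have h2q : x₂ ∈ q.support := q.snd_mem_support_of_mem_edges heq
      have h1 := hint x₁ h1p h1q
      have h2 := hint x₂ h2p h2q
      have hx12 : x₁ ≠ x₂ := G.ne_of_adj hadj
      have heac : s(x₁, x₂) = s(a, c) := by
        rcases h1 with rfl | rfl <;> rcases h2 with rfl | rfl
        · exact absurd rfl hx12
        · rfl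
        · exact Sym2.eq_swap
        · exact absurd rfl hx12
      rw [heac] at hep heq
      have hsp := path_edge_ends p hp hep
      have hsq := path_edge_ends q hq heq
      obtain ⟨v, hv1, hv2⟩ := hdiff
      rw [hsp] at hv1
      rw [hsq] at hv2
      exact hv2 hv1
  · -- nonempty
    intro hn
    have hc : c ∈ (p.append q.reverse).support :=
      (Walk.mem_support_append_iff _ _).2 (Or.inl p.end_mem_support)
    rw [hn, Walk.support_nil, List.mem_singleton] at hc
    exact hac hc.symm
  · -- support tail nodup
    have hsupp : (p.append q.reverse).support.tail
        = p.support.tail ++ q.reverse.support.tail := by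
      rw [Walk.support_append, p.support_eq_cons]
      rfl
    rw [hsupp]
    refine List.Nodup.append hp.support_nodup.tail hq.reverse.support_nodup.tail ?_
    intro v hv1 hv2
    have hvp : v ∈ p.support := List.mem_of_mem_tail hv1
    have hvq : v ∈ q.support := by
      have := List.mem_of_mem_tail hv2
      rwa [Walk.support_reverse, List.mem_reverse] at this
    rcases hint v hvp hvq with rfl | rfl
    · have hnd := hp.support_nodup
      rw [p.support_eq_cons] at hnd
      exact (List.nodup_cons.1 hnd).1 hv1
    · have hnd := hq.reverse.support_nodup
      rw [q.reverse.support_eq_cons] at hnd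
      exact (List.nodup_cons.1 hnd).1 hv2

end PhyloNetwork

namespace PhyloNetwork

open Relation SimpleGraph

variable {V X : Type} [Fintype V] [Fintype X] (N : PhyloNetwork V X)

lemma lca_below_common {x y : X} (hN : N.Level1) (u : V) (hu : N.IsLCA {x, y} u)
    (b : V) (hb : N.CommonAncestor {x, y} b) : N.below u b := by
  show ReflTransGen N.Adj b u
  by_contra hub
  have hbu : ¬ ReflTransGen N.Adj u b := by
    intro h
    rcases eq_or_ne b u with rfl | hne
    · exact hub ReflTransGen.refl
    · exact hu.2 b hb ⟨h, hne⟩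
  have hx : ReflTransGen N.Adj u (N.leaf x) := hu.1 (Set.mem_insert x {y})
  have hy : ReflTransGen N.Adj u (N.leaf y) :=
    hu.1 (Set.mem_insert_iff.2 (Or.inr rfl))
  have hbx : ReflTransGen N.Adj b (N.leaf x) := hb (Set.mem_insert x {y})
  have hby : ReflTransGen N.Adj b (N.leaf y) :=
    hb (Set.mem_insert_iff.2 (Or.inr rfl))
  obtain ⟨z, ⟨hzu, hzb⟩, hzmin⟩ :=
    N.exists_min {v | ReflTransGen N.Adj v u ∧ ReflTransGen N.Adj v b}
      ⟨N.root, N.root_reaches u, N.root_reaches b⟩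
  obtain ⟨s, ⟨hus, hbs, hsx⟩, hsmax⟩ := N.exists_max
    {v | ReflTransGen N.Adj u v ∧ ReflTransGen N.Adj b v ∧ ReflTransGen N.Adj v (N.leaf x)}
      ⟨N.leaf x, hx, hbx, ReflTransGen.refl⟩
  obtain ⟨t, ⟨hut, hbt, hty⟩, htmax⟩ := N.exists_max
    {v | ReflTransGen N.Adj u v ∧ ReflTransGen N.Adj b v ∧ ReflTransGen N.Adj v (N.leaf y)}
      ⟨N.leaf y, hy, hby, ReflTransGen.refl⟩
  -- basic distinctness
  have hsu : s ≠ u := fun h => hub (h ▸ hbs)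
  have htu : t ≠ u := fun h => hub (h ▸ hbt)
  have hzu' : z ≠ u := fun h => hbu (h ▸ hzb)
  have hzs : z ≠ s := by
    intro h
    exact hzu' (N.rtg_antisymm hzu (h ▸ hus))
  have hzt : z ≠ t := by
    intro h
    exact hzu' (N.rtg_antisymm hzu (h ▸ hut))
  -- the four path segments (s-side and t-side)
  obtain ⟨P1, hP1, hB1⟩ := N.exists_walk hzu
  obtain ⟨P4, hP4, hB4⟩ := N.exists_walk hzb
  obtain ⟨P2s, hP2s, hB2s⟩ := N.exists_walk hus
  obtain ⟨P3s, hP3s, hB3s⟩ := N.exists_walk hbs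
  obtain ⟨P2t, hP2t, hB2t⟩ := N.exists_walk hut
  obtain ⟨P3t, hP3t, hB3t⟩ := N.exists_walk hbt
  -- assemble the two z → ? paths and cycles for each of s, t
  have key : ∀ (s' L : V) (hus' : ReflTransGen N.Adj u s') (hbs' : ReflTransGen N.Adj b s')
      (hs'max : ∀ v, (ReflTransGen N.Adj u v ∧ ReflTransGen N.Adj b v ∧
          ReflTransGen N.Adj v L) → ¬ TransGen N.Adj v s')
      (hs'x : ReflTransGen N.Adj s' L) (hzs' : z ≠ s')
      (P2 : N.underlying.Walk u s') (P3 : N.underlying.Walk b s')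
      (hP2 : P2.IsPath) (hP3 : P3.IsPath)
      (hB2 : ∀ v ∈ P2.support, ReflTransGen N.Adj u v ∧ ReflTransGen N.Adj v s')
      (hB3 : ∀ v ∈ P3.support, ReflTransGen N.Adj b v ∧ ReflTransGen N.Adj v s'),
      ((P1.append P2).append (P4.append P3).reverse).IsCycle := by
    intro s' L hus' hbs' hs'max hs'x hzs' P2 P3 hP2 hP3 hB2 hB3
    have hR1 : (P1.append P2).IsPath := by
      refine isPath_append hP1 hP2 ?_
      intro v hv1 hv2
      exact N.rtg_antisymm (hB1 v hv1).2 (hB2 v hv2).1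
    have hR2 : (P4.append P3).IsPath := by
      refine isPath_append hP4 hP3 ?_
      intro v hv1 hv2
      exact N.rtg_antisymm (hB4 v hv1).2 (hB3 v hv2).1
    refine isCycle_append_reverse _ _ hR1 hR2 hzs' ?_ ?_
    · intro v hv1 hv2
      rcases (Walk.mem_support_append_iff _ _).1 hv1 with h1 | h1 <;>
        rcases (Walk.mem_support_append_iff _ _).1 hv2 with h2 | h2
      · -- P1 and P4 : v = z
        left
        rcases eq_or_ne v z with rfl | hne
        · rfl
        · exact absurd (N.rtg_to_tg (hB1 v h1).1 (Ne.symm hne))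
            (hzmin v ⟨(hB1 v h1).2, (hB4 v h2).2⟩)
      · -- P1 and P3 : impossible
        exact absurd ((hB3 v h2).1.trans (hB1 v h1).2) hub
      · -- P2 and P4 : impossible
        exact absurd ((hB2 v h1).1.trans (hB4 v h2).2) hbu
      · -- P2 and P3 : v = s'
        right
        rcases eq_or_ne v s' with rfl | hne
        · rfl
        · exact absurd (N.rtg_to_tg (hB2 v h1).2 hne)
            (hs'max v ⟨(hB2 v h1).1, (hB3 v h2).1, (hB2 v h1).2.trans hs'x⟩)
    · refine ⟨u, (Walk.mem_support_append_iff _ _).2 (Or.inl P1.end_mem_support), ?_⟩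
      intro hmem
      rcases (Walk.mem_support_append_iff _ _).1 hmem with h1 | h1
      · exact hbu (hB4 u h1).2
      · exact hub (hB3 u h1).1
  have hcs := key s (N.leaf x) hus hbs (fun v hv => hsmax v hv) hsx hzs P2s P3s hP2s hP3s hB2s hB3s
  have hct := key t (N.leaf y) hut hbt (fun v hv => htmax v hv) hty hzt P2t P3t hP2t hP3t hB2t hB3t
  -- apply the level-1 property to these two cycles sharing z
  have hiff := hN.2 z z _ _ hcs hct z
    (Walk.start_mem_support _) (Walk.start_mem_support _) s
  have hsCs : s ∈ ((P1.append P2s).append (P4.append P3s).reverse).support :=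
    (Walk.mem_support_append_iff _ _).2
      (Or.inl ((Walk.mem_support_append_iff _ _).2 (Or.inr P2s.end_mem_support)))
  have hsCt := hiff.1 hsCs
  -- s lies somewhere on the t-cycle: derive a contradiction in each case
  have hst : ReflTransGen N.Adj s t := by
    rcases (Walk.mem_support_append_iff _ _).1 hsCt with h1 | h1
    · rcases (Walk.mem_support_append_iff _ _).1 h1 with h2 | h2
      · -- s on P1 (z to u): then s = u, impossible
        exact absurd (N.rtg_antisymm (hB1 s h2).2 hus) hsu
      · -- s on P2t (u to t)
        exact (hB2t s h2).2
    · rw [Walk.support_reverse, List.mem_reverse] at h1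
      rcases (Walk.mem_support_append_iff _ _).1 h1 with h2 | h2
      · -- s on P4 (z to b): then s = b, so u ⪯ ... contradiction
        exfalso
        have hsb : s = b := N.rtg_antisymm (hB4 s h2).2 hbs
        exact hbu (hsb ▸ hus)
      · -- s on P3t (b to t)
        exact (hB3t s h2).2
  -- s is then a common ancestor of {x, y} strictly below u: contradiction
  have hca : N.CommonAncestor {x, y} s := by
    intro a ha
    rcases Set.mem_insert_iff.1 ha with rfl | ha'
    · exact hsx
    · rw [Set.mem_singleton_iff] at ha'
      subst ha'
      exact hst.trans hty
  exact hu.2 s hca ⟨hus, hsu⟩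

end PhyloNetwork

namespace PhyloNetwork

open Relation

variable {V X : Type} [Fintype V] [Fintype X] (N : PhyloNetwork V X)

lemma mem_pair_left (x y : X) : x ∈ ({x, y} : Set X) := Set.mem_insert x {y}
lemma mem_pair_right (x y : X) : y ∈ ({x, y} : Set X) := Set.mem_insert_iff.2 (Or.inr rfl)

/-- core of the forward direction -/
lemma no_split_of_stable {x y : X} {u : V} (hu : N.IsLCA {x, y} u)
    (hstab : N.StableAncestor {x, y} u) (v c₁ c₂ : V)
    (h1 : N.Adj v c₁) (h2 : N.Adj v c₂)
    (hx1 : ReflTransGen N.Adj c₁ (N.leaf x)) (hx2 : ReflTransGen N.Adj c₂ (N.leaf x))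
    (hy1 : ReflTransGen N.Adj c₁ (N.leaf y)) (hy2 : ¬ ReflTransGen N.Adj c₂ (N.leaf y)) :
    False := by
  obtain ⟨p₁, hp₁, hb₁⟩ := N.exists_dipath (N.root_reaches v)
  obtain ⟨p₂, hp₂, hb₂⟩ := N.exists_dipath hx2
  have hdisj : ∀ m ∈ p₁, m ∉ p₂ := by
    intro m hm1 hm2
    exact N.acyclic v (Relation.TransGen.head' h2 ((hb₂ m hm2).1.trans (hb₁ m hm1).2))
  have hP : N.IsDipath (p₁ ++ p₂) N.root (N.leaf x) :=
    N.dipath_append hp₁ hp₂ h2 hdisj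
  have hmem := hstab x (PhyloNetwork.mem_pair_left x y) (p₁ ++ p₂) hP
  rcases List.mem_append.1 hmem with hm | hm
  · -- u above v: then c₁ is a common ancestor strictly below u
    have huv : ReflTransGen N.Adj u v := (hb₁ u hm).2
    have hca : N.CommonAncestor {x, y} c₁ := by
      intro a ha
      rcases Set.mem_insert_iff.1 ha with rfl | ha'
      · exact hx1
      · rw [Set.mem_singleton_iff] at ha'; subst ha'; exact hy1
    have hne : c₁ ≠ u := by
      rintro rfl
      exact N.acyclic v (Relation.TransGen.head' h1 huv)
    exact hu.2 c₁ hca ⟨huv.tail h1, hne⟩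
  · -- u below c₂: then y would be below c₂
    have hcu : ReflTransGen N.Adj c₂ u := (hb₂ u hm).1
    exact hy2 (hcu.trans (hu.1 (PhyloNetwork.mem_pair_right x y)))

/-- core of the backward direction: if there is no splitting ancestor then
every root-to-`leaf x` dipath passes through the LCA `u` -/
lemma stable_of_no_split {x y : X} (hN : N.Level1) {u : V} (hu : N.IsLCA {x, y} u)
    (hns : ∀ v, ¬ N.SplittingAncestor x y v) (p : List V)
    (hp : N.IsDipath p N.root (N.leaf x)) : u ∈ p := by
  by_contra hup
  obtain ⟨hne, hhd, hlast, hch, hnd⟩ := hp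
  have hlfmem : N.leaf x ∈ p := List.mem_of_getLast? hlast
  have hPn : ¬ ReflTransGen N.Adj (N.leaf x) u := by
    intro h
    have heq := N.leaf_no_out x h
    rw [heq] at hup
    exact hup hlfmem
  obtain ⟨a', b', hab, hPa', hPb', ha'm, hb'm⟩ :=
    N.exists_transition (fun v => ReflTransGen N.Adj v u) p hch hhd
      (N.root_reaches u) hlast hPn
  have ha'ne : a' ≠ u := fun h => hup (h ▸ ha'm)
  obtain ⟨c, hac, hcu⟩ : ∃ c, N.Adj a' c ∧ ReflTransGen N.Adj c u := by
    rcases hPa'.cases_head with h | h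
    · exact absurd h ha'ne
    · exact h
  have hcb' : c ≠ b' := fun h => hPb' (h ▸ hcu)
  have hxb' : ReflTransGen N.Adj b' (N.leaf x) :=
    (N.dipath_between p ⟨hne, hhd, hlast, hch, hnd⟩ hb'm).2
  have hxc : ReflTransGen N.Adj c (N.leaf x) := hcu.trans (hu.1 (PhyloNetwork.mem_pair_left x y))
  have hyc : ReflTransGen N.Adj c (N.leaf y) := hcu.trans (hu.1 (PhyloNetwork.mem_pair_right x y))
  by_cases hyb' : ReflTransGen N.Adj b' (N.leaf y)
  · have hca : N.CommonAncestor {x, y} b' := by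
      intro a ha
      rcases Set.mem_insert_iff.1 ha with rfl | ha'
      · exact hxb'
      · rw [Set.mem_singleton_iff] at ha'; subst ha'; exact hyb'
    exact hPb' (N.lca_below_common hN u hu b' hca)
  · exact hns a' ⟨c, b', hcb', hac, hab, Or.inl ⟨hxc, hxb', Or.inl ⟨hyc, hyb'⟩⟩⟩

lemma splitting_comm {x y : X} {v : V} (h : N.SplittingAncestor y x v) :
    N.SplittingAncestor x y v := by
  obtain ⟨c₁, c₂, hne, h1, h2, hc⟩ := h
  exact ⟨c₁, c₂, hne, h1, h2, hc.symm⟩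

lemma pair_comm' (x y : X) : ({x, y} : Set X) = {y, x} := Set.pair_comm x y

end PhyloNetwork

/-- In a level-1 phylogenetic network `N` on a finite set `X`, for
distinct taxa `x, y ∈ X`, the equality `lca(x,y) = lsa(x,y)` holds if and only
if `x` and `y` have no splitting ancestor in `N`. -/
theorem lca_eq_lsa_iff_no_splitting_ancestor {V X : Type} [Fintype V] [Fintype X]
    (N : PhyloNetwork V X) (hN : N.Level1) (x y : X) (hxy : x ≠ y)
    (u w : V) (hu : N.IsLCA {x, y} u) (hw : N.IsLSA {x, y} w) :
    u = w ↔ ∀ v, ¬ N.SplittingAncestor x y v := by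
  constructor
  · rintro rfl v hsv
    have hstab : N.StableAncestor {x, y} u := hw.1
    have hu' : N.IsLCA {y, x} u := by rw [Set.pair_comm y x]; exact hu
    have hstab' : N.StableAncestor {y, x} u := by rw [Set.pair_comm y x]; exact hstab
    obtain ⟨c₁, c₂, hne, h1, h2, hc⟩ := hsv
    rcases hc with ⟨hx1, hx2, hxor⟩ | ⟨hy1, hy2, hxor⟩
    · rcases hxor with ⟨hy1, hy2⟩ | ⟨hy2, hy1⟩
      · exact N.no_split_of_stable hu hstab v c₁ c₂ h1 h2 hx1 hx2 hy1 hy2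
      · exact N.no_split_of_stable hu hstab v c₂ c₁ h2 h1 hx2 hx1 hy2 hy1
    · rcases hxor with ⟨hx1, hx2⟩ | ⟨hx2, hx1⟩
      · exact N.no_split_of_stable hu' hstab' v c₁ c₂ h1 h2 hy1 hy2 hx1 hx2
      · exact N.no_split_of_stable hu' hstab' v c₂ c₁ h2 h1 hy2 hy1 hx2 hx1
  · intro hns
    have hnsymm : ∀ v, ¬ N.SplittingAncestor y x v := fun v h => hns v (N.splitting_comm h)
    have hu' : N.IsLCA {y, x} u := by rw [Set.pair_comm y x]; exact hu
    have hstab : N.StableAncestor {x, y} u := by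
      intro a ha p hp
      rcases Set.mem_insert_iff.1 ha with rfl | ha'
      · exact N.stable_of_no_split hN hu hns p hp
      · rw [Set.mem_singleton_iff] at ha'; subst ha'
        exact N.stable_of_no_split hN hu' hnsymm p hp
    have hwu : ReflTransGen N.Adj u w := hw.2 u hstab
    have hwx : ReflTransGen N.Adj w (N.leaf x) := by
      obtain ⟨p, hp, -⟩ := N.exists_dipath (N.root_reaches (N.leaf x))
      exact (N.dipath_between p hp (hw.1 x (PhyloNetwork.mem_pair_left x y) p hp)).2
    have hwy : ReflTransGen N.Adj w (N.leaf y) := by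
      obtain ⟨p, hp, -⟩ := N.exists_dipath (N.root_reaches (N.leaf y))
      exact (N.dipath_between p hp (hw.1 y (PhyloNetwork.mem_pair_right x y) p hp)).2
    have hwca : N.CommonAncestor {x, y} w := by
      intro a ha
      rcases Set.mem_insert_iff.1 ha with rfl | ha'
      · exact hwx
      · rw [Set.mem_singleton_iff] at ha'; subst ha'; exact hwy
    by_contra huw
    exact hu.2 w hwca ⟨hwu, fun h => huw h.symm⟩
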